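/- Let G : ℝ^N → Mat(N,ℝ) be continuous, symmetric-valued, with α|η|² ≤ η·G(ξ)η ≤ β|η|² uniformly (0 < α ≤ β). If ξₙ ⇀ ξ weakly in H¹((0,T); ℝ^N), then E(ξ) ≤ liminf E(ξₙ), where E(ξ) = ∫₀ᵀ G(ξ(t))ξ'(t)·ξ'(t) dt. -/

import Mathlib

open scoped RealInnerProductSpace
open Set MeasureTheory intervalIntegral Filter


set_option maxHeartbeats 1000000

section Aux

lemma psd_opnorm_le {E : Type*} [NormedAddCommGroup E] [InnerProductSpace ℝ E]
    {A : E →L[ℝ] E} {β : ℝ} (hβ : 0 ≤ β)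
    (hs : ∀ η ζ : E, ⟪A η, ζ⟫ = ⟪η, A ζ⟫)
    (h0 : ∀ η, 0 ≤ ⟪η, A η⟫) (hb : ∀ η, ⟪η, A η⟫ ≤ β * ‖η‖ ^ 2) :
    ‖A‖ ≤ β := by
  have key : ∀ u w : E, ⟪u, A w⟫ ^ 2 ≤ ⟪u, A u⟫ * ⟪w, A w⟫ := by
    intro u w
    have hq : ∀ c : ℝ, 0 ≤ ⟪w, A w⟫ * (c * c) + (2 * ⟪u, A w⟫) * c + ⟪u, A u⟫ := by
      intro c
      have h9 := h0 (u + c • w)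
      have hexp : ⟪u + c • w, A (u + c • w)⟫
          = ⟪w, A w⟫ * (c * c) + (2 * ⟪u, A w⟫) * c + ⟪u, A u⟫ := by
        have h1 : ⟪w, A u⟫ = ⟪u, A w⟫ := by rw [← hs u w, real_inner_comm]
        simp only [map_add, A.map_smul, inner_add_left, inner_add_right,
          real_inner_smul_left, real_inner_smul_right, h1]
        ring
      linarith [hexp ▸ h9]
    have hd := discrim_le_zero hq
    rw [discrim] at hd
    nlinarith [hd]
  refine A.opNorm_le_bound hβ fun u => ?_
  rcases eq_or_ne (A u) 0 with h | h
  · simp [h]; positivity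
  · have h2 : ⟪A u, A u⟫ = ‖A u‖ ^ 2 := real_inner_self_eq_norm_sq _
    have h3 : ⟪A u, A (A u)⟫ ≤ β * ‖A u‖ ^ 2 := hb _
    have h4 : ⟪u, A u⟫ ≤ β * ‖u‖ ^ 2 := hb _
    have h6 : ⟪u, A (A u)⟫ = ‖A u‖ ^ 2 := by rw [← hs u (A u), real_inner_comm, h2]
    have hAu : 0 < ‖A u‖ := norm_pos_iff.mpr h
    have h7 : (‖A u‖ ^ 2) ^ 2 ≤ (β * ‖u‖ ^ 2) * (β * ‖A u‖ ^ 2) := by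
      have hk := key u (A u)
      rw [h6] at hk
      nlinarith [h0 u, h0 (A u), hk, h2]
    have h8 : ‖A u‖ ^ 2 ≤ β ^ 2 * ‖u‖ ^ 2 := by nlinarith [h7, pow_pos hAu 2]
    nlinarith [h8, hAu, mul_nonneg hβ (norm_nonneg u)]

lemma key_ineq {E : Type*} [NormedAddCommGroup E] [InnerProductSpace ℝ E]
    {α : ℝ} (hα : 0 < α) {A A0 : E →L[ℝ] E}
    (hsA : ∀ η ζ : E, ⟪A η, ζ⟫ = ⟪η, A ζ⟫)
    (hsA0 : ∀ η ζ : E, ⟪A0 η, ζ⟫ = ⟪η, A0 ζ⟫)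
    (hcoerA : ∀ η, α * ‖η‖ ^ 2 ≤ ⟪η, A η⟫) (u x : E) :
    ⟪u, A u⟫ + 2*⟪x, A0 u⟫ - 2*⟪u, A0 u⟫ - α⁻¹*(‖A - A0‖^2*‖u‖^2) ≤ ⟪x, A x⟫ := by
  set d := x - u with hd
  have hxd : x = u + d := by rw [hd, add_sub_cancel]
  have hsym : ⟪d, A u⟫ = ⟪u, A d⟫ := by rw [real_inner_comm, hsA u d]
  have hexp : ⟪x, A x⟫ = ⟪u, A u⟫ + 2*⟪u, A d⟫ + ⟪d, A d⟫ := by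
    rw [hxd, map_add, inner_add_left, inner_add_right, inner_add_right, hsym]
    ring
  have h2 : ⟪u, A d⟫ = ⟪u, A0 d⟫ + ⟪u, (A - A0) d⟫ := by
    rw [ContinuousLinearMap.sub_apply, inner_sub_right]; ring
  have h3 : ⟪u, A0 d⟫ = ⟪x, A0 u⟫ - ⟪u, A0 u⟫ := by
    rw [hd, map_sub, inner_sub_right]
    congr 1
    rw [← hsA0 u x, real_inner_comm]
  have h4 : -(‖A - A0‖*‖u‖*‖d‖) ≤ ⟪u, (A - A0) d⟫ := by
    have hb : |⟪u, (A - A0) d⟫| ≤ ‖u‖ * ‖(A - A0) d‖ := abs_real_inner_le_norm _ _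
    have hop : ‖(A - A0) d‖ ≤ ‖A - A0‖ * ‖d‖ := (A - A0).le_opNorm d
    have := neg_abs_le ⟪u, (A - A0) d⟫
    nlinarith [norm_nonneg u, norm_nonneg ((A - A0) d), norm_nonneg (A - A0), norm_nonneg d]
  have h5 : α*‖d‖^2 ≤ ⟪d, A d⟫ := hcoerA d
  have h6 : 2*(‖A - A0‖*‖u‖*‖d‖) ≤ α⁻¹*(‖A - A0‖^2*‖u‖^2) + α*‖d‖^2 := by
    have hpos : (0:ℝ) ≤ α⁻¹ * (‖A - A0‖*‖u‖ - α*‖d‖)^2 := by positivity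
    have hid : α⁻¹*(‖A - A0‖*‖u‖ - α*‖d‖)^2
        = α⁻¹*(‖A - A0‖^2*‖u‖^2) - 2*(‖A - A0‖*‖u‖*‖d‖) + α*‖d‖^2 := by
      field_simp
      ring
    linarith [hid ▸ hpos]
  linarith [hexp, h2, h3, h4, h5, h6]

lemma fubini_primitive {h : ℝ → ℝ} {T : ℝ} (hT : 0 < T)
    (hi : IntegrableOn h (Ioc 0 T)) :
    ∫ s in Ioc (0:ℝ) T, (∫ r in Ioc (0:ℝ) s, h r) = ∫ r in Ioc (0:ℝ) T, (T - r) * h r := by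
  set μ := volume.restrict (Ioc (0:ℝ) T) with hμ
  have hone : Integrable (fun _ : ℝ => (1:ℝ)) μ := by
    rw [hμ]
    exact (integrableOn_const_iff (by simp)).mpr (Or.inr measure_Ioc_lt_top)
  have hint : Integrable (Function.uncurry (fun s r : ℝ => if r ≤ s then h r else 0)) (μ.prod μ) := by
    have hmeas : AEStronglyMeasurable (fun p : ℝ × ℝ => if p.2 ≤ p.1 then h p.2 else 0) (μ.prod μ) := by
      have h1 : AEStronglyMeasurable (fun p : ℝ × ℝ => h p.2) (μ.prod μ) :=
        hi.aestronglyMeasurable.comp_snd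
      have h2 : MeasurableSet {p : ℝ × ℝ | p.2 ≤ p.1} :=
        measurableSet_le measurable_snd measurable_fst
      refine (h1.indicator h2).congr (Eventually.of_forall fun p => ?_)
      by_cases hp : p.2 ≤ p.1 <;> simp [Set.indicator, hp]
    have hbound : Integrable (fun p : ℝ × ℝ => ‖h p.2‖) (μ.prod μ) := by
      have := hone.mul_prod hi.norm
      simpa using this
    refine hbound.mono' hmeas (Eventually.of_forall fun p => ?_)
    by_cases hp : p.2 ≤ p.1 <;> simp [Function.uncurry, hp]
  have lhs_eq : ∫ s in Ioc (0:ℝ) T, (∫ r in Ioc (0:ℝ) s, h r)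
      = ∫ s, (∫ r, (if r ≤ s then h r else 0) ∂μ) ∂μ := by
    refine setIntegral_congr_fun measurableSet_Ioc fun s hs => ?_
    have hind : (fun r => if r ≤ s then h r else 0) = (Iic s).indicator h := by
      ext r; by_cases hr : r ≤ s <;> simp [Set.indicator, hr]
    have hset2 : Iic s ∩ Ioc 0 T = Ioc 0 s := by
      ext r
      simp only [mem_inter_iff, mem_Iic, mem_Ioc]
      constructor
      · rintro ⟨h1, h2, _⟩; exact ⟨h2, h1⟩
      · rintro ⟨h1, h2⟩; exact ⟨h2, h1, h2.trans hs.2⟩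
    rw [hind, MeasureTheory.integral_indicator measurableSet_Iic, hμ,
      Measure.restrict_restrict measurableSet_Iic, hset2]
  rw [lhs_eq, integral_integral_swap hint]
  refine setIntegral_congr_fun measurableSet_Ioc fun r hr => ?_
  have hind : (fun s => if r ≤ s then h r else 0) = (Ici r).indicator (fun _ => h r) := by
    ext s; by_cases hs : r ≤ s <;> simp [Set.indicator, hs]
  have hset : Ici r ∩ Ioc 0 T = Icc r T := by
    ext s
    simp only [mem_inter_iff, mem_Ici, mem_Ioc, mem_Icc]
    constructor
    · rintro ⟨h1, _, h3⟩; exact ⟨h1, h3⟩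
    · rintro ⟨h1, h2⟩; exact ⟨h1, hr.1.trans_le h1, h2⟩
  rw [hind, MeasureTheory.integral_indicator measurableSet_Ici, hμ,
    Measure.restrict_restrict measurableSet_Ici, hset, setIntegral_const,
    Real.volume_real_Icc_of_le (by linarith [hr.2] : r ≤ T)]
  simp [smul_eq_mul]


variable {E : Type*} [NormedAddCommGroup E] [InnerProductSpace ℝ E] [CompleteSpace E]

lemma inner_intervalIntegrable {f : ℝ → E} {a b : ℝ}
    (hf : IntervalIntegrable f volume a b) (v : E) :
    IntervalIntegrable (fun s => ⟪f s, v⟫) volume a b := by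
  have h1 : IntervalIntegrable (fun s => (innerSL ℝ v) (f s)) volume a b :=
    ⟨(innerSL ℝ v).integrable_comp hf.1, (innerSL ℝ v).integrable_comp hf.2⟩
  exact h1.congr (fun s _ => by
    simp [innerSL_apply_apply, real_inner_comm])

lemma inner_intervalIntegral {f : ℝ → E} {a b : ℝ}
    (hf : IntervalIntegrable f volume a b) (v : E) :
    ⟪∫ s in a..b, f s, v⟫ = ∫ s in a..b, ⟪f s, v⟫ := by
  have h1 := (innerSL ℝ v).intervalIntegral_comp_comm hf
  calc ⟪∫ s in a..b, f s, v⟫ = (innerSL ℝ v) (∫ s in a..b, f s) := by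
        simp [innerSL_apply_apply, real_inner_comm]
    _ = ∫ s in a..b, (innerSL ℝ v) (f s) := h1.symm
    _ = ∫ s in a..b, ⟪f s, v⟫ := by
        refine intervalIntegral.integral_congr fun s _ => ?_
        simp [innerSL_apply_apply, real_inner_comm]

lemma repr_eval {T : ℝ} (hT : 0 < T) {ζ ζ' : ℝ → E}
    (hd : IntervalIntegrable ζ' volume 0 T)
    (hrep : ∀ t ∈ Icc 0 T, ζ t = ζ 0 + ∫ s in (0:ℝ)..t, ζ' s)
    {t : ℝ} (ht : t ∈ Icc 0 T) (v : E) :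
    ∫ s in (0:ℝ)..T, (⟪ζ s, T⁻¹ • v⟫
        + ⟪ζ' s, (((if s ≤ t then (1:ℝ) else 0) - (T - s)/T)) • v⟫)
      = ⟪ζ t, v⟫ := by
  have hT' : (T:ℝ) ≠ 0 := hT.ne'
  set h : ℝ → ℝ := fun s => ⟪ζ' s, v⟫ with hh_def
  set w : ℝ → ℝ := fun s => (if s ≤ t then (1:ℝ) else 0) - (T - s)/T with hw_def
  have hh : IntervalIntegrable h volume 0 T := inner_intervalIntegrable hd v
  have hhIoc : IntegrableOn h (Ioc 0 T) :=
    (intervalIntegrable_iff_integrableOn_Ioc_of_le hT.le).1 hh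
  have hhIcc : IntegrableOn h (Icc 0 T) :=
    (integrableOn_Icc_iff_integrableOn_Ioc (by simp)).2 hhIoc
  have hprim_cont : ContinuousOn (fun x => ∫ r in Ioc (0:ℝ) x, h r) (Icc 0 T) :=
    continuousOn_primitive hhIcc
  have hprim_int : IntegrableOn (fun x => ∫ r in Ioc (0:ℝ) x, h r) (Ioc 0 T) :=
    (hprim_cont.integrableOn_compact isCompact_Icc).mono_set Ioc_subset_Icc_self
  have fact1 : ∀ s ∈ Icc (0:ℝ) T, ⟪ζ s, v⟫ = ⟪ζ 0, v⟫ + ∫ r in Ioc (0:ℝ) s, h r := by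
    intro s hs
    rw [hrep s hs, inner_add_left, ← intervalIntegral.integral_of_le hs.1]
    congr 1
    exact inner_intervalIntegral (hd.mono_set (by
      rw [uIcc_of_le hs.1, uIcc_of_le hT.le]; exact Icc_subset_Icc le_rfl hs.2)) v
  -- integrability of the two pieces
  have intA : IntegrableOn (fun s => T⁻¹ * ⟪ζ s, v⟫) (Ioc 0 T) := by
    have : IntegrableOn (fun s => T⁻¹ * (⟪ζ 0, v⟫ + ∫ r in Ioc (0:ℝ) s, h r)) (Ioc 0 T) :=
      ((integrable_const _).add hprim_int).const_mul _
    refine this.congr_fun (fun s hs => ?_) measurableSet_Ioc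
    rw [fact1 s (Ioc_subset_Icc_self hs)]
  have hwmeas : Measurable w := by
    apply Measurable.sub
    · exact measurable_const.ite measurableSet_Iic measurable_const
    · exact (measurable_const.sub measurable_id).div_const T
  have intB : IntegrableOn (fun s => w s * h s) (Ioc 0 T) := by
    refine (hhIoc.norm.const_mul 2).mono'
      (hwmeas.aestronglyMeasurable.mul hhIoc.aestronglyMeasurable) ?_
    filter_upwards [ae_restrict_mem measurableSet_Ioc] with s hs
    have h1 : |w s| ≤ 2 := by
      have h2 : (0:ℝ) ≤ (T - s)/T := by
        apply div_nonneg (by linarith [hs.2]) hT.le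
      have h3 : (T - s)/T ≤ 1 := by
        rw [div_le_one hT]; linarith [hs.1]
      rw [hw_def]; dsimp only
      split <;> (rw [abs_le]; constructor <;> linarith)
    rw [norm_mul]
    calc ‖w s‖ * ‖h s‖ ≤ 2 * ‖h s‖ :=
          mul_le_mul_of_nonneg_right (by rwa [Real.norm_eq_abs]) (norm_nonneg _)
      _ = 2 * ‖h s‖ := rfl
  -- rewrite the goal integrand
  have hgoal_fun : (fun s => ⟪ζ s, T⁻¹ • v⟫ + ⟪ζ' s, w s • v⟫)
      = fun s => T⁻¹ * ⟪ζ s, v⟫ + w s * h s := by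
    funext s; rw [real_inner_smul_right, real_inner_smul_right]
  rw [intervalIntegral.integral_of_le hT.le]
  show ∫ s in Ioc (0:ℝ) T, (⟪ζ s, T⁻¹ • v⟫ + ⟪ζ' s, w s • v⟫) = ⟪ζ t, v⟫
  rw [hgoal_fun, integral_add intA intB]
  -- compute A
  have hA : ∫ s in Ioc (0:ℝ) T, T⁻¹ * ⟪ζ s, v⟫
      = ⟪ζ 0, v⟫ + T⁻¹ * ∫ r in Ioc (0:ℝ) T, (T - r) * h r := by
    rw [MeasureTheory.integral_const_mul]
    rw [setIntegral_congr_fun measurableSet_Ioc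
      (fun s hs => fact1 s (Ioc_subset_Icc_self hs))]
    rw [integral_add (integrable_const _) hprim_int, setIntegral_const,
      fubini_primitive hT hhIoc, Real.volume_real_Ioc_of_le hT.le, sub_zero,
      smul_eq_mul, mul_add]
    rw [← mul_assoc, inv_mul_cancel₀ hT', one_mul]
  -- compute B
  have hB : ∫ s in Ioc (0:ℝ) T, w s * h s
      = (∫ r in Ioc (0:ℝ) t, h r) - T⁻¹ * ∫ r in Ioc (0:ℝ) T, (T - r) * h r := by
    have hsplit : ∀ s, w s * h s
        = ((Iic t).indicator h) s - (T⁻¹ * (T - s)) * h s := by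
      intro s
      rw [hw_def]
      by_cases hst : s ≤ t
      · simp only [Set.indicator, mem_Iic, hst, if_true, if_pos]
        field_simp
      · simp only [Set.indicator, mem_Iic, hst, if_false, if_neg, not_false_iff]
        field_simp
        ring
    have int1 : IntegrableOn ((Iic t).indicator h) (Ioc 0 T) :=
      hhIoc.indicator measurableSet_Iic
    have int2 : IntegrableOn (fun s => (T⁻¹ * (T - s)) * h s) (Ioc 0 T) := by
      refine hhIoc.norm.mono'
        (((continuous_const.mul (continuous_const.sub continuous_id)).aestronglyMeasurable).mul
          hhIoc.aestronglyMeasurable) ?_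
      filter_upwards [ae_restrict_mem measurableSet_Ioc] with s hs
      rw [norm_mul]
      have h1 : |T⁻¹ * (T - s)| ≤ 1 := by
        have hnn : 0 ≤ T⁻¹ * (T - s) :=
          mul_nonneg (inv_nonneg.2 hT.le) (by linarith [hs.2])
        rw [abs_of_nonneg hnn, mul_comm, ← div_eq_mul_inv, div_le_one hT]
        linarith [hs.1]
      calc ‖T⁻¹ * (T - s)‖ * ‖h s‖ ≤ 1 * ‖h s‖ :=
            mul_le_mul_of_nonneg_right (by rwa [Real.norm_eq_abs]) (norm_nonneg _)
        _ = ‖h s‖ := one_mul _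
    rw [setIntegral_congr_fun measurableSet_Ioc (fun s _ => hsplit s),
      integral_sub int1 int2]
    congr 1
    · rw [MeasureTheory.integral_indicator measurableSet_Iic,
        Measure.restrict_restrict measurableSet_Iic]
      congr 1
      have : Iic t ∩ Ioc 0 T = Ioc 0 t := by
        ext r
        simp only [mem_inter_iff, mem_Iic, mem_Ioc]
        constructor
        · rintro ⟨h1, h2, _⟩; exact ⟨h2, h1⟩
        · rintro ⟨h1, h2⟩; exact ⟨h2, h1, h2.trans ht.2⟩
      rw [this]
    · have : (fun s => (T⁻¹ * (T - s)) * h s) = fun s => T⁻¹ * ((T - s) * h s) := by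
        funext s; ring
      rw [this, MeasureTheory.integral_const_mul]
  rw [hA, hB, fact1 t ht]
  ring

end Aux

variable {N : ℕ}

/-- Membership in `H¹((0,T); ℝᴺ)`: absolutely continuous with
square-integrable derivative `ξ'`. -/
def MemH1 (T : ℝ) (ξ ξ' : ℝ → EuclideanSpace ℝ (Fin N)) : Prop :=
  IntervalIntegrable ξ' volume 0 T ∧
  IntervalIntegrable (fun t => ‖ξ' t‖ ^ 2) volume 0 T ∧
  IntervalIntegrable (fun t => ‖ξ t‖ ^ 2) volume 0 T ∧
  (∀ t ∈ Icc 0 T, ξ t = ξ 0 + ∫ s in (0:ℝ)..t, ξ' s)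

/-- Weak convergence `ξₙ ⇀ ξ` in `H¹((0,T); ℝᴺ)`, tested against arbitrary
`L²` pairs `(g, g')`. -/
def WeakH1Tendsto (T : ℝ) (ξseq ξseq' : ℕ → ℝ → EuclideanSpace ℝ (Fin N))
    (ξ ξ' : ℝ → EuclideanSpace ℝ (Fin N)) : Prop :=
  ∀ g g' : ℝ → EuclideanSpace ℝ (Fin N),
    IntervalIntegrable (fun t => ‖g t‖ ^ 2) volume 0 T →
    IntervalIntegrable (fun t => ‖g' t‖ ^ 2) volume 0 T →
    Tendsto (fun n => ∫ t in (0:ℝ)..T, (⟪ξseq n t, g t⟫ + ⟪ξseq' n t, g' t⟫))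
      atTop (nhds (∫ t in (0:ℝ)..T, (⟪ξ t, g t⟫ + ⟪ξ' t, g' t⟫)))

lemma weak_point_conv {T : ℝ} (hT : 0 < T)
    {ξseq ξseq' : ℕ → ℝ → EuclideanSpace ℝ (Fin N)} {ξ ξ' : ℝ → EuclideanSpace ℝ (Fin N)}
    (hseq : ∀ n, MemH1 T (ξseq n) (ξseq' n)) (hlim : MemH1 T ξ ξ')
    (hweak : WeakH1Tendsto T ξseq ξseq' ξ ξ') {t : ℝ} (ht : t ∈ Icc 0 T) :
    Tendsto (fun n => ξseq n t) atTop (nhds (ξ t)) := by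
  have hv : ∀ v : EuclideanSpace ℝ (Fin N),
      Tendsto (fun n => ⟪ξseq n t, v⟫) atTop (nhds ⟪ξ t, v⟫) := by
    intro v
    have hg : IntervalIntegrable
        (fun s : ℝ => ‖(fun _ : ℝ => T⁻¹ • v) s‖^2) volume 0 T := by
      exact _root_.intervalIntegrable_const (c := ‖T⁻¹ • v‖^2)
    set g' : ℝ → EuclideanSpace ℝ (Fin N) :=
      fun s => ((if s ≤ t then (1:ℝ) else 0) - (T - s)/T) • v with hg'_def
    have hg' : IntervalIntegrable (fun s => ‖g' s‖^2) volume 0 T := by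
      rw [intervalIntegrable_iff_integrableOn_Ioc_of_le hT.le]
      have hbint : IntegrableOn (fun _ : ℝ => 4 * ‖v‖^2) (Ioc 0 T) volume :=
        (integrableOn_const_iff enorm_ne_top).mpr (Or.inr measure_Ioc_lt_top)
      refine hbint.mono' ?_ ?_
      · have hwmeas : Measurable fun s : ℝ => (if s ≤ t then (1:ℝ) else 0) - (T - s)/T :=
          (measurable_const.ite measurableSet_Iic measurable_const).sub
            ((measurable_const.sub measurable_id).div_const T)
        have : (fun s => ‖g' s‖^2)
            = fun s => ((if s ≤ t then (1:ℝ) else 0) - (T - s)/T)^2 * ‖v‖^2 := by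
          funext s
          rw [hg'_def]
          simp only [norm_smul, Real.norm_eq_abs, mul_pow, sq_abs]
        rw [this]
        exact ((hwmeas.pow_const 2).mul_const _).aestronglyMeasurable
      · filter_upwards [ae_restrict_mem measurableSet_Ioc] with s hs
        have h2 : (0:ℝ) ≤ (T - s)/T := div_nonneg (by linarith [hs.2]) hT.le
        have h3 : (T - s)/T ≤ 1 := by rw [div_le_one hT]; linarith [hs.1]
        have habs : |(if s ≤ t then (1:ℝ) else 0) - (T - s)/T| ≤ 2 := by
          split <;> (rw [abs_le]; constructor <;> linarith)
        rw [hg'_def]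
        simp only [norm_smul, Real.norm_eq_abs]
        rw [abs_of_nonneg (sq_nonneg _), mul_pow, sq_abs]
        have : ((if s ≤ t then (1:ℝ) else 0) - (T - s)/T)^2 ≤ 4 := by
          nlinarith [habs, abs_nonneg ((if s ≤ t then (1:ℝ) else 0) - (T - s)/T),
            sq_abs ((if s ≤ t then (1:ℝ) else 0) - (T - s)/T),
            neg_abs_le ((if s ≤ t then (1:ℝ) else 0) - (T - s)/T),
            le_abs_self ((if s ≤ t then (1:ℝ) else 0) - (T - s)/T)]
        nlinarith [sq_nonneg ‖v‖]
    have h1 := hweak (fun _ => T⁻¹ • v) g' hg hg'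
    have h2 : ∀ (ζ : ℝ → EuclideanSpace ℝ (Fin N)) (ζ' : ℝ → EuclideanSpace ℝ (Fin N)),
        MemH1 T ζ ζ' →
        (∫ s in (0:ℝ)..T, (⟪ζ s, T⁻¹ • v⟫ + ⟪ζ' s, g' s⟫)) = ⟪ζ t, v⟫ := by
      intro ζ ζ' hm
      exact repr_eval hT hm.1 hm.2.2.2 ht v
    rw [h2 ξ ξ' hlim] at h1
    refine h1.congr fun n => h2 _ _ (hseq n)
  -- upgrade to vector convergence
  set b := EuclideanSpace.basisFun (Fin N) ℝ with hb
  have hsum : Tendsto (fun n => ∑ i, ⟪b i, ξseq n t⟫ • b i) atTop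
      (nhds (∑ i, ⟪b i, ξ t⟫ • b i)) := by
    refine tendsto_finset_sum _ fun i _ => Tendsto.smul_const ?_ _
    have := hv (b i)
    simp_rw [real_inner_comm] at this ⊢
    exact this
  have heq : ∀ x : EuclideanSpace ℝ (Fin N), ∑ i, ⟪b i, x⟫ • b i = x := fun x => b.sum_repr' x
  refine Tendsto.congr (fun n => heq (ξseq n t)) ?_
  rw [← heq (ξ t)]
  exact hsum

/-- Weak lower semicontinuity of the dissipated-energy functional
`E(ξ) = ∫₀ᵀ G(ξ)ξ'·ξ' dt` along weakly `H¹`-convergent sequences. -/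
theorem energy_weak_lsc (T : ℝ) (hT : 0 < T)
    (G : EuclideanSpace ℝ (Fin N) → EuclideanSpace ℝ (Fin N) →L[ℝ] EuclideanSpace ℝ (Fin N))
    (hGcont : Continuous G)
    (hGsymm : ∀ ξ η ζ, ⟪G ξ η, ζ⟫ = ⟪η, G ξ ζ⟫)
    (α β : ℝ) (hα : 0 < α) (hαβ : α ≤ β)
    (hcoer : ∀ ξ η, α * ‖η‖ ^ 2 ≤ ⟪η, G ξ η⟫)
    (hbdd : ∀ ξ η, ⟪η, G ξ η⟫ ≤ β * ‖η‖ ^ 2)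
    (ξseq ξseq' : ℕ → ℝ → EuclideanSpace ℝ (Fin N))
    (ξ ξ' : ℝ → EuclideanSpace ℝ (Fin N))
    (hseq : ∀ n, MemH1 T (ξseq n) (ξseq' n)) (hlim : MemH1 T ξ ξ')
    (hweak : WeakH1Tendsto T ξseq ξseq' ξ ξ') :
    (∫ t in (0:ℝ)..T, ⟪ξ' t, G (ξ t) (ξ' t)⟫) ≤
      liminf (fun n => ∫ t in (0:ℝ)..T, ⟪ξseq' n t, G (ξseq n t) (ξseq' n t)⟫)
        atTop := by
  classical
  set μ := volume.restrict (Ioc (0:ℝ) T) with hμ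
  have hβ0 : 0 ≤ β := le_trans hα.le hαβ
  have hGz0 : ∀ (z η : EuclideanSpace ℝ (Fin N)), (0:ℝ) ≤ ⟪η, G z η⟫ := fun z η =>
    le_trans (by positivity) (hcoer z η)
  have hGnorm : ∀ z : EuclideanSpace ℝ (Fin N), ‖G z‖ ≤ β := fun z =>
    psd_opnorm_le hβ0 (hGsymm z) (hGz0 z) (hbdd z)
  -- continuity of the curves on [0,T]
  have hcontOn : ∀ (ζ ζ' : ℝ → EuclideanSpace ℝ (Fin N)), MemH1 T ζ ζ' → ContinuousOn ζ (Icc 0 T) := by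
    intro ζ ζ' hm
    have hint : IntegrableOn ζ' (uIcc (0:ℝ) T) volume := by
      rw [uIcc_of_le hT.le, integrableOn_Icc_iff_integrableOn_Ioc]
      exact (intervalIntegrable_iff_integrableOn_Ioc_of_le hT.le).1 hm.1
    have hc : ContinuousOn (fun t => ζ 0 + ∫ s in (0:ℝ)..t, ζ' s) (Icc 0 T) := by
      have h1 := intervalIntegral.continuousOn_primitive_interval hint
      rw [uIcc_of_le hT.le] at h1
      exact continuousOn_const.add h1
    exact hc.congr hm.2.2.2
  -- measurability infrastructure
  have hmeas_of : ∀ (ζ ζ' : ℝ → EuclideanSpace ℝ (Fin N)), MemH1 T ζ ζ' → AEStronglyMeasurable ζ μ := by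
    intro ζ ζ' hm
    exact ((hcontOn ζ ζ' hm).mono Ioc_subset_Icc_self).aestronglyMeasurable measurableSet_Ioc
  have hξm : AEStronglyMeasurable ξ μ := hmeas_of ξ ξ' hlim
  have hξnm : ∀ n, AEStronglyMeasurable (ξseq n) μ := fun n => hmeas_of _ _ (hseq n)
  have hξ'm : AEStronglyMeasurable ξ' μ :=
    ((intervalIntegrable_iff_integrableOn_Ioc_of_le hT.le).1 hlim.1).aestronglyMeasurable
  have hξn'm : ∀ n, AEStronglyMeasurable (ξseq' n) μ := fun n =>
    ((intervalIntegrable_iff_integrableOn_Ioc_of_le hT.le).1 (hseq n).1).aestronglyMeasurable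
  have hsq : IntegrableOn (fun t => ‖ξ' t‖^2) (Ioc 0 T) volume :=
    (intervalIntegrable_iff_integrableOn_Ioc_of_le hT.le).1 hlim.2.1
  have hsqn : ∀ n, IntegrableOn (fun t => ‖ξseq' n t‖^2) (Ioc 0 T) volume := fun n =>
    (intervalIntegrable_iff_integrableOn_Ioc_of_le hT.le).1 (hseq n).2.1
  have happly : ∀ (f u : ℝ → EuclideanSpace ℝ (Fin N)), AEStronglyMeasurable f μ → AEStronglyMeasurable u μ →
      AEStronglyMeasurable (fun t => G (f t) (u t)) μ := by
    intro f u hf hu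
    have hp : AEStronglyMeasurable (fun t => (G (f t), u t)) μ :=
      (hGcont.comp_aestronglyMeasurable hf).prodMk hu
    exact (isBoundedBilinearMap_apply.continuous).comp_aestronglyMeasurable hp
  have hinner : ∀ (f u : ℝ → EuclideanSpace ℝ (Fin N)), AEStronglyMeasurable f μ → AEStronglyMeasurable u μ →
      AEStronglyMeasurable (fun t => ⟪f t, u t⟫) μ := by
    intro f u hf hu
    exact continuous_inner.comp_aestronglyMeasurable (hf.prodMk hu)
  have hψm : AEStronglyMeasurable (fun t => G (ξ t) (ξ' t)) μ := happly ξ ξ' hξm hξ'm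
  have hψb : ∀ t, ‖G (ξ t) (ξ' t)‖ ≤ β * ‖ξ' t‖ := fun t =>
    le_trans ((G (ξ t)).le_opNorm (ξ' t))
      (mul_le_mul_of_nonneg_right (hGnorm _) (norm_nonneg _))
  have hψsq : IntervalIntegrable (fun t => ‖G (ξ t) (ξ' t)‖^2) volume 0 T := by
    rw [intervalIntegrable_iff_integrableOn_Ioc_of_le hT.le]
    refine (hsq.const_mul (β^2)).mono' ?_ ?_
    · have h1 : (fun t => ‖G (ξ t) (ξ' t)‖^2) = fun t => ‖G (ξ t) (ξ' t)‖*‖G (ξ t) (ξ' t)‖ := by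
        funext t; ring
      rw [h1]; exact hψm.norm.mul hψm.norm
    · refine Eventually.of_forall fun t => ?_
      rw [Real.norm_eq_abs, abs_of_nonneg (sq_nonneg _)]
      have := hψb t
      nlinarith [norm_nonneg (G (ξ t) (ξ' t)), norm_nonneg (ξ' t)]
  have hpt : ∀ t ∈ Icc (0:ℝ) T, Tendsto (fun n => ξseq n t) atTop (nhds (ξ t)) :=
    fun t ht => weak_point_conv hT hseq hlim hweak ht
  -- integrability of the pieces
  have inta : ∀ n, IntegrableOn (fun t => ⟪ξ' t, G (ξseq n t) (ξ' t)⟫) (Ioc 0 T) volume := by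
    intro n
    refine (hsq.const_mul β).mono' (hinner _ _ hξ'm (happly _ _ (hξnm n) hξ'm)) ?_
    refine Eventually.of_forall fun t => ?_
    rw [Real.norm_eq_abs, abs_of_nonneg (hGz0 _ _)]
    exact hbdd _ _
  have intb : ∀ n, IntegrableOn (fun t => ⟪ξseq' n t, G (ξ t) (ξ' t)⟫) (Ioc 0 T) volume := by
    intro n
    refine (((hsqn n).add (hsq.const_mul (β^2))).const_mul (1/2 : ℝ)).mono'
      (hinner _ _ (hξn'm n) hψm) ?_
    refine Eventually.of_forall fun t => ?_
    simp only [Pi.add_apply]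
    rw [Real.norm_eq_abs]
    have h1 : |⟪ξseq' n t, G (ξ t) (ξ' t)⟫| ≤ ‖ξseq' n t‖ * ‖G (ξ t) (ξ' t)‖ :=
      abs_real_inner_le_norm _ _
    have h2 := hψb t
    have h3 : ‖ξseq' n t‖ * ‖G (ξ t) (ξ' t)‖ ≤ ‖ξseq' n t‖ * (β * ‖ξ' t‖) :=
      mul_le_mul_of_nonneg_left h2 (norm_nonneg _)
    nlinarith [norm_nonneg (ξseq' n t), norm_nonneg (G (ξ t) (ξ' t)), norm_nonneg (ξ' t),
      sq_nonneg (‖ξseq' n t‖ - β * ‖ξ' t‖)]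
  have intb0 : IntegrableOn (fun t => ⟪ξ' t, G (ξ t) (ξ' t)⟫) (Ioc 0 T) volume := by
    refine (hsq.const_mul β).mono' (hinner _ _ hξ'm (happly _ _ hξm hξ'm)) ?_
    refine Eventually.of_forall fun t => ?_
    rw [Real.norm_eq_abs, abs_of_nonneg (hGz0 _ _)]
    exact hbdd _ _
  have intc : ∀ n, IntegrableOn (fun t => ‖G (ξseq n t) - G (ξ t)‖^2 * ‖ξ' t‖^2)
      (Ioc 0 T) volume := by
    intro n
    have hdm : AEStronglyMeasurable (fun t => G (ξseq n t) - G (ξ t)) μ :=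
      (hGcont.comp_aestronglyMeasurable (hξnm n)).sub (hGcont.comp_aestronglyMeasurable hξm)
    refine (hsq.const_mul ((2*β)^2)).mono' ?_ ?_
    · have h1 : (fun t => ‖G (ξseq n t) - G (ξ t)‖^2 * ‖ξ' t‖^2)
          = fun t => (‖G (ξseq n t) - G (ξ t)‖*‖G (ξseq n t) - G (ξ t)‖)*(‖ξ' t‖*‖ξ' t‖) := by
        funext t; ring
      rw [h1]
      exact (hdm.norm.mul hdm.norm).mul (hξ'm.norm.mul hξ'm.norm)
    · refine Eventually.of_forall fun t => ?_
      rw [Real.norm_eq_abs, abs_of_nonneg (by positivity)]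
      have h1 : ‖G (ξseq n t) - G (ξ t)‖ ≤ 2*β := by
        refine le_trans (norm_sub_le _ _) ?_
        linarith [hGnorm (ξseq n t), hGnorm (ξ t)]
      have h2 : ‖G (ξseq n t) - G (ξ t)‖^2 ≤ (2*β)^2 := by
        nlinarith [norm_nonneg (G (ξseq n t) - G (ξ t))]
      nlinarith [sq_nonneg (‖ξ' t‖)]
  have inte : ∀ n, IntegrableOn (fun t => ⟪ξseq' n t, G (ξseq n t) (ξseq' n t)⟫)
      (Ioc 0 T) volume := by
    intro n
    refine ((hsqn n).const_mul β).mono' (hinner _ _ (hξn'm n) (happly _ _ (hξnm n) (hξn'm n))) ?_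
    refine Eventually.of_forall fun t => ?_
    rw [Real.norm_eq_abs, abs_of_nonneg (hGz0 _ _)]
    exact hbdd _ _
  -- the lower-bound integrand
  have hkey : ∀ n t, ⟪ξ' t, G (ξseq n t) (ξ' t)⟫ + 2*⟪ξseq' n t, G (ξ t) (ξ' t)⟫
      - 2*⟪ξ' t, G (ξ t) (ξ' t)⟫ - α⁻¹*(‖G (ξseq n t) - G (ξ t)‖^2*‖ξ' t‖^2)
      ≤ ⟪ξseq' n t, G (ξseq n t) (ξseq' n t)⟫ := fun n t =>
    key_ineq hα (hGsymm (ξseq n t)) (hGsymm (ξ t)) (hcoer (ξseq n t)) (ξ' t) (ξseq' n t)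
  have intφ : ∀ n, IntegrableOn (fun t => ⟪ξ' t, G (ξseq n t) (ξ' t)⟫
      + 2*⟪ξseq' n t, G (ξ t) (ξ' t)⟫ - 2*⟪ξ' t, G (ξ t) (ξ' t)⟫
      - α⁻¹*(‖G (ξseq n t) - G (ξ t)‖^2*‖ξ' t‖^2)) (Ioc 0 T) volume := fun n =>
    (((inta n).add ((intb n).const_mul 2)).sub (intb0.const_mul 2)).sub ((intc n).const_mul α⁻¹)
  have hlow : ∀ n, (∫ t in Ioc (0:ℝ) T, (⟪ξ' t, G (ξseq n t) (ξ' t)⟫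
      + 2*⟪ξseq' n t, G (ξ t) (ξ' t)⟫ - 2*⟪ξ' t, G (ξ t) (ξ' t)⟫
      - α⁻¹*(‖G (ξseq n t) - G (ξ t)‖^2*‖ξ' t‖^2)))
      ≤ ∫ t in Ioc (0:ℝ) T, ⟪ξseq' n t, G (ξseq n t) (ξseq' n t)⟫ := fun n =>
    setIntegral_mono_on (intφ n) (inte n) measurableSet_Ioc (fun t _ => hkey n t)
  -- split the lower-bound integral
  have hsplit : ∀ n, (∫ t in Ioc (0:ℝ) T, (⟪ξ' t, G (ξseq n t) (ξ' t)⟫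
      + 2*⟪ξseq' n t, G (ξ t) (ξ' t)⟫ - 2*⟪ξ' t, G (ξ t) (ξ' t)⟫
      - α⁻¹*(‖G (ξseq n t) - G (ξ t)‖^2*‖ξ' t‖^2)))
      = (∫ t in Ioc (0:ℝ) T, ⟪ξ' t, G (ξseq n t) (ξ' t)⟫)
        + 2*(∫ t in Ioc (0:ℝ) T, ⟪ξseq' n t, G (ξ t) (ξ' t)⟫)
        - 2*(∫ t in Ioc (0:ℝ) T, ⟪ξ' t, G (ξ t) (ξ' t)⟫)
        - α⁻¹*(∫ t in Ioc (0:ℝ) T, ‖G (ξseq n t) - G (ξ t)‖^2*‖ξ' t‖^2) := by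
    intro n
    have i1 : IntegrableOn (fun t => ⟪ξ' t, G (ξseq n t) (ξ' t)⟫
        + 2*⟪ξseq' n t, G (ξ t) (ξ' t)⟫) (Ioc 0 T) volume :=
      (inta n).add ((intb n).const_mul 2)
    have i2 : IntegrableOn (fun t => ⟪ξ' t, G (ξseq n t) (ξ' t)⟫
        + 2*⟪ξseq' n t, G (ξ t) (ξ' t)⟫ - 2*⟪ξ' t, G (ξ t) (ξ' t)⟫) (Ioc 0 T) volume :=
      i1.sub (intb0.const_mul 2)
    rw [integral_sub i2 ((intc n).const_mul α⁻¹), integral_sub i1 (intb0.const_mul 2),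
      integral_add (inta n) ((intb n).const_mul 2),
      MeasureTheory.integral_const_mul, MeasureTheory.integral_const_mul,
      MeasureTheory.integral_const_mul]
  -- limits
  have LA : Tendsto (fun n => ∫ t in Ioc (0:ℝ) T, ⟪ξ' t, G (ξseq n t) (ξ' t)⟫) atTop
      (nhds (∫ t in Ioc (0:ℝ) T, ⟪ξ' t, G (ξ t) (ξ' t)⟫)) := by
    refine tendsto_integral_of_dominated_convergence (fun t => β * ‖ξ' t‖^2)
      (fun n => hinner _ _ hξ'm (happly _ _ (hξnm n) hξ'm)) (hsq.const_mul β) ?_ ?_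
    · intro n
      refine Eventually.of_forall fun t => ?_
      rw [Real.norm_eq_abs, abs_of_nonneg (hGz0 _ _)]
      exact hbdd _ _
    · filter_upwards [ae_restrict_mem measurableSet_Ioc] with t htt
      have h1 := hpt t (Ioc_subset_Icc_self htt)
      have hcz : Continuous fun z : EuclideanSpace ℝ (Fin N) => ⟪ξ' t, G z (ξ' t)⟫ := by
        have h2 : Continuous fun z : EuclideanSpace ℝ (Fin N) => G z (ξ' t) :=
          isBoundedBilinearMap_apply.continuous.comp (hGcont.prodMk continuous_const)
        exact continuous_const.inner h2
      exact (hcz.tendsto (ξ t)).comp h1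
  have LC : Tendsto (fun n => ∫ t in Ioc (0:ℝ) T, ‖G (ξseq n t) - G (ξ t)‖^2*‖ξ' t‖^2) atTop
      (nhds 0) := by
    have hmain : Tendsto (fun n => ∫ t in Ioc (0:ℝ) T, ‖G (ξseq n t) - G (ξ t)‖^2*‖ξ' t‖^2)
        atTop (nhds (∫ _ in Ioc (0:ℝ) T, (0:ℝ))) := by
      refine tendsto_integral_of_dominated_convergence (fun t => (2*β)^2 * ‖ξ' t‖^2)
        ?_ (hsq.const_mul ((2*β)^2)) ?_ ?_
      · intro n
        have hdm : AEStronglyMeasurable (fun t => G (ξseq n t) - G (ξ t)) μ :=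
          (hGcont.comp_aestronglyMeasurable (hξnm n)).sub (hGcont.comp_aestronglyMeasurable hξm)
        have h1 : (fun t => ‖G (ξseq n t) - G (ξ t)‖^2 * ‖ξ' t‖^2)
            = fun t => (‖G (ξseq n t) - G (ξ t)‖*‖G (ξseq n t) - G (ξ t)‖)*(‖ξ' t‖*‖ξ' t‖) := by
          funext t; ring
        rw [h1]
        exact (hdm.norm.mul hdm.norm).mul (hξ'm.norm.mul hξ'm.norm)
      · intro n
        refine Eventually.of_forall fun t => ?_
        rw [Real.norm_eq_abs, abs_of_nonneg (by positivity)]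
        have h1 : ‖G (ξseq n t) - G (ξ t)‖ ≤ 2*β := by
          refine le_trans (norm_sub_le _ _) ?_
          linarith [hGnorm (ξseq n t), hGnorm (ξ t)]
        have h2 : ‖G (ξseq n t) - G (ξ t)‖^2 ≤ (2*β)^2 := by
          nlinarith [norm_nonneg (G (ξseq n t) - G (ξ t))]
        beta_reduce
        nlinarith [sq_nonneg (‖ξ' t‖), mul_le_mul_of_nonneg_right h2 (sq_nonneg (‖ξ' t‖))]
      · filter_upwards [ae_restrict_mem measurableSet_Ioc] with t htt
        have h1 := hpt t (Ioc_subset_Icc_self htt)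
        have hcz : Continuous fun z : EuclideanSpace ℝ (Fin N) => ‖G z - G (ξ t)‖^2*‖ξ' t‖^2 := by
          have hn : Continuous fun z : EuclideanSpace ℝ (Fin N) => ‖G z - G (ξ t)‖ :=
            (hGcont.sub continuous_const).norm
          exact ((hn.mul hn).mul
            (continuous_const : Continuous fun _ : EuclideanSpace ℝ (Fin N) => ‖ξ' t‖^2)).congr
            (fun z => by simp only [Pi.mul_apply, Pi.pow_apply]; ring)
        have h2 : Tendsto (fun n => ‖G (ξseq n t) - G (ξ t)‖^2*‖ξ' t‖^2) atTop
            (nhds (‖G (ξ t) - G (ξ t)‖^2*‖ξ' t‖^2)) := (hcz.tendsto (ξ t)).comp h1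
        rw [sub_self, norm_zero, zero_pow (two_ne_zero), zero_mul] at h2
        exact h2
    rw [MeasureTheory.integral_zero] at hmain
    exact hmain
  have LB : Tendsto (fun n => ∫ t in Ioc (0:ℝ) T, ⟪ξseq' n t, G (ξ t) (ξ' t)⟫) atTop
      (nhds (∫ t in Ioc (0:ℝ) T, ⟪ξ' t, G (ξ t) (ξ' t)⟫)) := by
    have h0sq : IntervalIntegrable
        (fun t : ℝ => ‖(fun _ : ℝ => (0:EuclideanSpace ℝ (Fin N))) t‖^2) volume 0 T := by
      exact _root_.intervalIntegrable_const (c := ‖(0:EuclideanSpace ℝ (Fin N))‖^2)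
    have h1 := hweak (fun _ => (0:EuclideanSpace ℝ (Fin N))) (fun t => G (ξ t) (ξ' t)) h0sq hψsq
    simp only [inner_zero_right, zero_add] at h1
    simp only [intervalIntegral.integral_of_le hT.le] at h1
    exact h1
  -- combined limit
  have hc : Tendsto (fun n => (∫ t in Ioc (0:ℝ) T, ⟪ξ' t, G (ξseq n t) (ξ' t)⟫)
        + 2*(∫ t in Ioc (0:ℝ) T, ⟪ξseq' n t, G (ξ t) (ξ' t)⟫)
        - 2*(∫ t in Ioc (0:ℝ) T, ⟪ξ' t, G (ξ t) (ξ' t)⟫)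
        - α⁻¹*(∫ t in Ioc (0:ℝ) T, ‖G (ξseq n t) - G (ξ t)‖^2*‖ξ' t‖^2)) atTop
      (nhds (∫ t in Ioc (0:ℝ) T, ⟪ξ' t, G (ξ t) (ξ' t)⟫)) := by
    have hA2 : Tendsto (fun n => 2*(∫ t in Ioc (0:ℝ) T, ⟪ξseq' n t, G (ξ t) (ξ' t)⟫)) atTop
        (nhds (2*(∫ t in Ioc (0:ℝ) T, ⟪ξ' t, G (ξ t) (ξ' t)⟫))) := LB.const_mul 2
    have hCC : Tendsto (fun n => α⁻¹*(∫ t in Ioc (0:ℝ) T, ‖G (ξseq n t) - G (ξ t)‖^2*‖ξ' t‖^2))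
        atTop (nhds (α⁻¹*0)) := LC.const_mul α⁻¹
    have hconst : Tendsto (fun _ : ℕ => 2*(∫ t in Ioc (0:ℝ) T, ⟪ξ' t, G (ξ t) (ξ' t)⟫)) atTop
        (nhds (2*(∫ t in Ioc (0:ℝ) T, ⟪ξ' t, G (ξ t) (ξ' t)⟫))) := tendsto_const_nhds
    have h2 := ((LA.add hA2).sub hconst).sub hCC
    have h3 : (∫ t in Ioc (0:ℝ) T, ⟪ξ' t, G (ξ t) (ξ' t)⟫)
        + 2*(∫ t in Ioc (0:ℝ) T, ⟪ξ' t, G (ξ t) (ξ' t)⟫)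
        - 2*(∫ t in Ioc (0:ℝ) T, ⟪ξ' t, G (ξ t) (ξ' t)⟫) - α⁻¹*0
        = ∫ t in Ioc (0:ℝ) T, ⟪ξ' t, G (ξ t) (ξ' t)⟫ := by ring
    rw [h3] at h2
    exact h2
  -- conclude
  have hEeq : ∀ n, (∫ t in (0:ℝ)..T, ⟪ξseq' n t, G (ξseq n t) (ξseq' n t)⟫)
      = ∫ t in Ioc (0:ℝ) T, ⟪ξseq' n t, G (ξseq n t) (ξseq' n t)⟫ := fun n =>
    intervalIntegral.integral_of_le hT.le
  rw [intervalIntegral.integral_of_le hT.le]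
  have hge : ∀ n, (∫ t in Ioc (0:ℝ) T, ⟪ξ' t, G (ξseq n t) (ξ' t)⟫)
        + 2*(∫ t in Ioc (0:ℝ) T, ⟪ξseq' n t, G (ξ t) (ξ' t)⟫)
        - 2*(∫ t in Ioc (0:ℝ) T, ⟪ξ' t, G (ξ t) (ξ' t)⟫)
        - α⁻¹*(∫ t in Ioc (0:ℝ) T, ‖G (ξseq n t) - G (ξ t)‖^2*‖ξ' t‖^2)
      ≤ ∫ t in (0:ℝ)..T, ⟪ξseq' n t, G (ξseq n t) (ξseq' n t)⟫ := by
    intro n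
    rw [hEeq n, ← hsplit n]
    exact hlow n
  -- uniform L² bound on the derivatives via Banach–Steinhaus
  haveI hfin : IsFiniteMeasure μ := by
    constructor
    rw [hμ, Measure.restrict_apply_univ]
    exact measure_Ioc_lt_top
  have hmem : ∀ n, MemLp (ξseq' n) 2 μ := fun n =>
    (memLp_two_iff_integrable_sq_norm (hξn'm n)).2 (hsqn n)
  have hbs : ∃ C', ∀ n, ‖innerSL ℝ ((hmem n).toLp (ξseq' n))‖ ≤ C' := by
    apply banach_steinhaus
    intro x
    have hxm : AEStronglyMeasurable (⇑x) μ := Lp.aestronglyMeasurable x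
    have hx2 : Integrable (fun t => ‖x t‖^2) μ :=
      (memLp_two_iff_integrable_sq_norm hxm).1 (Lp.memLp x)
    have hg'2 : IntervalIntegrable (fun t => ‖x t‖^2) volume 0 T := by
      rw [intervalIntegrable_iff_integrableOn_Ioc_of_le hT.le]; exact hx2
    have h0sq : IntervalIntegrable
        (fun t : ℝ => ‖(fun _ : ℝ => (0:EuclideanSpace ℝ (Fin N))) t‖^2) volume 0 T :=
      _root_.intervalIntegrable_const (c := ‖(0:EuclideanSpace ℝ (Fin N))‖^2)
    have hw := hweak (fun _ => (0:EuclideanSpace ℝ (Fin N))) (⇑x) h0sq hg'2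
    simp only [inner_zero_right, zero_add] at hw
    have key : ∀ n, (inner ℝ ((hmem n).toLp (ξseq' n)) x : ℝ)
        = ∫ t in (0:ℝ)..T, ⟪ξseq' n t, x t⟫ := by
      intro n
      rw [MeasureTheory.L2.inner_def, intervalIntegral.integral_of_le hT.le]
      refine integral_congr_ae ?_
      filter_upwards [(hmem n).coeFn_toLp] with t ht
      rw [ht]
    obtain ⟨C, hC⟩ :=
      (hw.norm.bddAbove_range : BddAbove (Set.range fun n => ‖∫ t in (0:ℝ)..T, ⟪ξseq' n t, x t⟫‖))
    refine ⟨C, fun n => ?_⟩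
    rw [innerSL_apply_apply, key n]
    exact hC ⟨n, rfl⟩
  obtain ⟨C', hC'⟩ := hbs
  have hfnorm : ∀ n, ‖(hmem n).toLp (ξseq' n)‖ ≤ C' := fun n => by
    rw [← innerSL_apply_norm (𝕜 := ℝ)]; exact hC' n
  have hC'0 : (0:ℝ) ≤ C' := le_trans (norm_nonneg _) (hfnorm 0)
  have hL2bound : ∀ n, (∫ t in Ioc (0:ℝ) T, ‖ξseq' n t‖^2) ≤ C'^2 := by
    intro n
    have h1 : (∫ t in Ioc (0:ℝ) T, ‖ξseq' n t‖^2)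
        = (inner ℝ ((hmem n).toLp (ξseq' n)) ((hmem n).toLp (ξseq' n)) : ℝ) := by
      rw [MeasureTheory.L2.inner_def]
      refine integral_congr_ae ?_
      filter_upwards [(hmem n).coeFn_toLp] with t ht
      rw [ht, real_inner_self_eq_norm_sq]
    rw [h1, real_inner_self_eq_norm_sq]
    nlinarith [hfnorm n, norm_nonneg ((hmem n).toLp (ξseq' n)), hC'0]
  have hcobE : IsCoboundedUnder (· ≥ ·) atTop
      (fun n => ∫ t in (0:ℝ)..T, ⟪ξseq' n t, G (ξseq n t) (ξseq' n t)⟫) := by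
    refine isCoboundedUnder_ge_of_le atTop (x := β * C'^2) fun n => ?_
    have h1 : (∫ t in Ioc (0:ℝ) T, ⟪ξseq' n t, G (ξseq n t) (ξseq' n t)⟫)
        ≤ ∫ t in Ioc (0:ℝ) T, β * ‖ξseq' n t‖^2 :=
      setIntegral_mono_on (inte n) ((hsqn n).const_mul β) measurableSet_Ioc
        (fun t _ => hbdd _ _)
    rw [hEeq n]
    rw [MeasureTheory.integral_const_mul] at h1
    exact le_trans h1 (mul_le_mul_of_nonneg_left (hL2bound n) hβ0)
  calc (∫ t in Ioc (0:ℝ) T, ⟪ξ' t, G (ξ t) (ξ' t)⟫)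
      = liminf (fun n => (∫ t in Ioc (0:ℝ) T, ⟪ξ' t, G (ξseq n t) (ξ' t)⟫)
        + 2*(∫ t in Ioc (0:ℝ) T, ⟪ξseq' n t, G (ξ t) (ξ' t)⟫)
        - 2*(∫ t in Ioc (0:ℝ) T, ⟪ξ' t, G (ξ t) (ξ' t)⟫)
        - α⁻¹*(∫ t in Ioc (0:ℝ) T, ‖G (ξseq n t) - G (ξ t)‖^2*‖ξ' t‖^2)) atTop :=
      (hc.liminf_eq).symm
    _ ≤ liminf (fun n => ∫ t in (0:ℝ)..T, ⟪ξseq' n t, G (ξseq n t) (ξseq' n t)⟫) atTop :=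
      liminf_le_liminf (Eventually.of_forall hge) hc.isBoundedUnder_ge hcobE
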